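/- Let q be a prime power, t ≥ 1 and n ≥ 2 integers, and M = (𝔽_q^{n×n})^t. If q > t + 1, then there exists no perfect linear sum-rank code C in M whose minimum distance d satisfies ⌊(d−1)/2⌋ = 1 (i.e., d ∈ {3, 4}). -/

import Mathlib

open Matrix

/-- The sum-rank weight of a tuple of matrices. -/
noncomputable def sumRankW {F : Type} [Field F] {t n m : ℕ}
    (X : Fin t → Matrix (Fin n) (Fin m) F) : ℕ :=
  ∑ i, (X i).rank

/-- The number of tuples of matrices of sum-rank weight at most `r`
(the volume of a sum-rank ball of radius `r`). -/
noncomputable def ballVol (F : Type) [Field F] [Fintype F] (t n m r : ℕ) : ℕ :=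
  Nat.card {X : Fin t → Matrix (Fin n) (Fin m) F // sumRankW X ≤ r}

/-- `d` is the minimum sum-rank distance of the linear code `C`:
`d` is the least sum-rank weight of a nonzero codeword of `C`
(in particular `C` contains a nonzero element). -/
def IsMinDist {F : Type} [Field F] {t n : ℕ}
    (C : Submodule F (Fin t → Matrix (Fin n) (Fin n) F)) (d : ℕ) : Prop :=
  IsLeast {w | ∃ x ∈ C, x ≠ 0 ∧ sumRankW x = w} d

/-- The linear code `C` with minimum distance `d` is perfect:
`|C| · V_{⌊(d-1)/2⌋} = |M|`. -/
def IsPerfect (F : Type) [Field F] [Fintype F] {t n : ℕ}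
    (C : Submodule F (Fin t → Matrix (Fin n) (Fin n) F)) (d : ℕ) : Prop :=
  Nat.card C * ballVol F t n n ((d - 1) / 2) =
    Nat.card (Fin t → Matrix (Fin n) (Fin n) F)

section AuxLemmas

set_option linter.unusedVariables false
set_option linter.unusedSectionVars false

variable {F : Type} [Field F] {n : ℕ}

lemma myRankZero (A : Matrix (Fin n) (Fin n) F) : A.rank = 0 ↔ A = 0 := by
  constructor
  · intro h
    have h2 : LinearMap.range A.mulVecLin = ⊥ := Submodule.finrank_eq_zero.mp h
    rw [LinearMap.range_eq_bot] at h2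
    ext i j
    have : A.mulVecLin (Pi.single j 1) = 0 := by rw [h2]; rfl
    have := congrFun this i
    simpa [Matrix.mulVecLin_apply, Matrix.mulVec_single] using this
  · rintro rfl; exact Matrix.rank_zero

lemma myVecMulVecRank {v w : Fin n → F} (hv : v ≠ 0) (hw : w ≠ 0) :
    (vecMulVec v w).rank = 1 := by
  have hle : (vecMulVec v w).rank ≤ 1 := by
    rw [vecMulVec_eq (Fin 1)]
    refine le_trans (Matrix.rank_mul_le_left _ _) ?_
    exact le_trans (Matrix.rank_le_card_width (Matrix.replicateCol (Fin 1) v)) (by simp)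
  have hne : vecMulVec v w ≠ 0 := by
    obtain ⟨i, hi⟩ := Function.ne_iff.mp hv
    obtain ⟨j, hj⟩ := Function.ne_iff.mp hw
    intro h0
    have := congrFun (congrFun h0 i) j
    simp only [vecMulVec_apply, Matrix.zero_apply] at this
    exact (mul_ne_zero (by simpa using hi) (by simpa using hj)) this
  have : (vecMulVec v w).rank ≠ 0 := fun h => hne ((myRankZero _).mp h)
  omega

lemma myFactor (A : Matrix (Fin n) (Fin n) F) (h : A.rank = 1) :
    ∃ v w : Fin n → F, v ≠ 0 ∧ w ≠ 0 ∧ A = vecMulVec v w := by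
  have hr : Module.rank F (LinearMap.range A.mulVecLin) = 1 := by
    rw [← Module.finrank_eq_rank]
    exact_mod_cast h
  obtain ⟨v₀, hv₀ne, hv₀⟩ := rank_eq_one_iff.mp hr
  choose w hw using fun j => hv₀ ⟨A.mulVec (Pi.single j 1), ⟨Pi.single j 1, rfl⟩⟩
  have hA : A = vecMulVec (v₀ : Fin n → F) w := by
    ext i j
    have hcol := congrArg Subtype.val (hw j)
    have hfi := congrFun hcol i
    simp only [Submodule.coe_smul, Pi.smul_apply, smul_eq_mul] at hfi
    have h2 : A.mulVec (Pi.single j 1) i = A i j := by simp [Matrix.mulVec_single]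
    rw [h2] at hfi
    rw [vecMulVec_apply, ← hfi, mul_comm]
  refine ⟨v₀, w, ?_, ?_, hA⟩
  · simpa using hv₀ne
  · intro hw0
    rw [hw0] at hA
    have : A = 0 := by ext i j; simp [hA, vecMulVec_apply]
    rw [this, Matrix.rank_zero] at h; exact one_ne_zero h.symm

lemma myUnique {v w v' w' : Fin n → F} (hv : v ≠ 0) (hw : w ≠ 0)
    (hv' : v' ≠ 0) (hw' : w' ≠ 0) (h : vecMulVec v w = vecMulVec v' w') :
    ∃ c : Fˣ, v = (c : F) • v' ∧ w = ((c⁻¹ : Fˣ) : F) • w' := by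
  have hij : ∀ i j, v i * w j = v' i * w' j := fun i j => by
    have := congrFun (congrFun h i) j
    simpa [vecMulVec_apply] using this
  obtain ⟨j₀, hj₀⟩ := Function.ne_iff.mp hw
  have hj₀' : w j₀ ≠ 0 := by simpa using hj₀
  set a : F := w' j₀ * (w j₀)⁻¹ with ha_def
  have hvv : ∀ i, v i = a * v' i := by
    intro i
    have h1 := hij i j₀
    field_simp [ha_def]
    linear_combination (w j₀)⁻¹ * h1 - v i * mul_inv_cancel₀ hj₀'
  have ha : a ≠ 0 := by
    intro h0
    apply hv
    funext i
    simp [hvv i, h0]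
  obtain ⟨i₀, hi₀⟩ := Function.ne_iff.mp hv'
  have hi₀' : v' i₀ ≠ 0 := by simpa using hi₀
  have hww : ∀ j, w j = a⁻¹ * w' j := by
    intro j
    have h1 := hij i₀ j
    rw [hvv i₀] at h1
    have h2 : a * w j = w' j := by
      apply mul_left_cancel₀ hi₀'
      linear_combination h1
    rw [← h2]
    field_simp
  refine ⟨Units.mk0 a ha, ?_, ?_⟩
  · funext i; simpa [mul_comm] using hvv i
  · funext j; simpa [mul_comm] using hww j

variable [Fintype F]

lemma myScal (c : Fˣ) (v w : Fin n → F) :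
    vecMulVec ((c : F) • v) (((c⁻¹ : Fˣ) : F) • w) = vecMulVec v w := by
  ext i j
  simp only [vecMulVec_apply, Pi.smul_apply, smul_eq_mul]
  linear_combination (v i * w j) * (Units.mul_inv c)

lemma myCardNonzero : Nat.card {v : Fin n → F // v ≠ 0} = Fintype.card F ^ n - 1 := by
  classical
  rw [Nat.card_eq_fintype_card]
  have h := Fintype.card_subtype_compl (fun v : Fin n → F => v = 0)
  simp only [Fintype.card_subtype_eq] at h
  have h2 : Fintype.card {v : Fin n → F // v ≠ 0} = Fintype.card {v : Fin n → F // ¬ (v = 0)} :=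
    Fintype.card_congr (Equiv.refl _)
  rw [h2]
  convert h using 2
  · simp [Fintype.card_fun]

lemma myCount :
    Nat.card {A : Matrix (Fin n) (Fin n) F // A.rank = 1} * (Fintype.card F - 1)
      = (Fintype.card F ^ n - 1) * (Fintype.card F ^ n - 1) := by
  classical
  choose v w hv hw hA using fun A : {A : Matrix (Fin n) (Fin n) F // A.rank = 1} =>
    myFactor A.1 A.2
  have hbij : Function.Bijective
      (fun p : {A : Matrix (Fin n) (Fin n) F // A.rank = 1} × Fˣ =>
        ((⟨(p.2 : F) • v p.1, smul_ne_zero p.2.ne_zero (hv p.1)⟩,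
          ⟨((p.2⁻¹ : Fˣ) : F) • w p.1, smul_ne_zero (p.2⁻¹).ne_zero (hw p.1)⟩) :
          {v : Fin n → F // v ≠ 0} × {w : Fin n → F // w ≠ 0})) := by
    constructor
    · rintro ⟨A, c⟩ ⟨A', c'⟩ hpq
      simp only [Prod.mk.injEq, Subtype.mk.injEq] at hpq
      obtain ⟨h1, h2⟩ := hpq
      have hAA : A = A' := by
        apply Subtype.ext
        calc A.1 = vecMulVec ((c : F) • v A) (((c⁻¹ : Fˣ) : F) • w A) := by
              rw [myScal]; exact hA A
          _ = vecMulVec ((c' : F) • v A') (((c'⁻¹ : Fˣ) : F) • w A') := by rw [h1, h2]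
          _ = A'.1 := by rw [myScal]; exact (hA A').symm
      subst hAA
      obtain ⟨i, hi⟩ := Function.ne_iff.mp (hv A)
      have hi' : v A i ≠ 0 := by simpa using hi
      have := congrFun h1 i
      simp only [Pi.smul_apply, smul_eq_mul] at this
      have hcc : (c : F) = (c' : F) := mul_right_cancel₀ hi' this
      exact Prod.ext rfl (Units.ext hcc)
    · rintro ⟨⟨v', hv'⟩, ⟨w', hw'⟩⟩
      set A : {A : Matrix (Fin n) (Fin n) F // A.rank = 1} :=
        ⟨vecMulVec v' w', myVecMulVecRank hv' hw'⟩ with hAdef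
      have hfac : vecMulVec v' w' = vecMulVec (v A) (w A) := hA A
      obtain ⟨c, hc1, hc2⟩ := myUnique hv' hw' (hv A) (hw A) hfac
      exact ⟨(A, c), by
        simp only [Prod.mk.injEq, Subtype.mk.injEq]
        exact ⟨hc1.symm, hc2.symm⟩⟩
  have := Nat.card_congr (Equiv.ofBijective _ hbij)
  rw [Nat.card_prod, Nat.card_prod, myCardNonzero] at this
  rw [← this, Nat.card_units, Nat.card_eq_fintype_card, Nat.card_eq_fintype_card]

lemma mySingleRank {t : ℕ} (i : Fin t) (M : Matrix (Fin n) (Fin n) F) :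
    sumRankW (Pi.single i M) = M.rank := by
  classical
  unfold sumRankW
  have h : ∀ j, ((Pi.single i M : Fin t → Matrix (Fin n) (Fin n) F) j).rank
      = if j = i then M.rank else 0 := by
    intro j
    rcases eq_or_ne j i with rfl | hj
    · simp
    · simp [Pi.single_eq_of_ne hj, Matrix.rank_zero, hj]
  simp_rw [h]
  simp

lemma myBall {t : ℕ} :
    ballVol F t n n 1 = 1 + t * Nat.card {A : Matrix (Fin n) (Fin n) F // A.rank = 1} := by
  classical
  have hbij : Function.Bijective
      (fun p : Unit ⊕ (Fin t × {A : Matrix (Fin n) (Fin n) F // A.rank = 1}) =>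
        (match p with
        | Sum.inl _ => ⟨0, by simp [sumRankW, Matrix.rank_zero]⟩
        | Sum.inr (i, A) => ⟨Pi.single i A.1, by rw [mySingleRank, A.2]⟩ :
          {X : Fin t → Matrix (Fin n) (Fin n) F // sumRankW X ≤ 1})) := by
    constructor
    · rintro (⟨⟩ | ⟨i, A⟩) (⟨⟩ | ⟨i', A'⟩) h <;>
        simp only [Subtype.mk.injEq] at h
      · rfl
      · exfalso
        have hc := congrFun h i'
        simp only [Pi.zero_apply, Pi.single_eq_same] at hc
        exact one_ne_zero (A'.2.symm.trans ((myRankZero A'.1).mpr hc.symm))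
      · exfalso
        have hc := congrFun h i
        simp only [Pi.zero_apply, Pi.single_eq_same] at hc
        exact one_ne_zero (A.2.symm.trans ((myRankZero A.1).mpr hc))
      · rcases eq_or_ne i i' with rfl | hii
        · have := congrFun h i
          simp only [Pi.single_eq_same] at this
          exact congrArg Sum.inr (Prod.ext rfl (Subtype.ext this))
        · exfalso
          have := congrFun h i
          rw [Pi.single_eq_same, Pi.single_eq_of_ne hii] at this
          have h0 : A.1.rank = 0 := (myRankZero A.1).mpr this
          rw [A.2] at h0; exact one_ne_zero h0
    · rintro ⟨X, hX⟩
      by_cases hX0 : X = 0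
      · exact ⟨Sum.inl (), Subtype.ext (by simp [hX0])⟩
      · obtain ⟨i, hi⟩ := Function.ne_iff.mp hX0
        have hi' : X i ≠ 0 := by simpa using hi
        have hri : (X i).rank ≠ 0 := fun h => hi' ((myRankZero _).mp h)
        have hle : (X i).rank ≤ sumRankW X :=
          Finset.single_le_sum (f := fun j => (X j).rank) (fun _ _ => Nat.zero_le _)
            (Finset.mem_univ i)
        have h1 : (X i).rank = 1 := by omega
        have hX' : (X i).rank + ∑ j ∈ Finset.univ.erase i, (X j).rank ≤ 1 := by
          rw [Finset.add_sum_erase Finset.univ (fun j => (X j).rank) (Finset.mem_univ i)]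
          exact hX
        have hzero : ∑ j ∈ Finset.univ.erase i, (X j).rank = 0 := by omega
        have hz : ∀ j, j ≠ i → X j = 0 := by
          intro j hj
          apply (myRankZero _).mp
          exact (Finset.sum_eq_zero_iff.mp hzero) j (Finset.mem_erase.mpr ⟨hj, Finset.mem_univ j⟩)
        refine ⟨Sum.inr (i, ⟨X i, h1⟩), Subtype.ext ?_⟩
        funext j
        rcases eq_or_ne j i with rfl | hj
        · simp
        · simp [Pi.single_eq_of_ne hj, hz j hj]
  have := Nat.card_congr (Equiv.ofBijective _ hbij)
  rw [Nat.card_sum, Nat.card_prod, Nat.card_unique, Nat.card_eq_fintype_card (α := Fin t),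
    Fintype.card_fin] at this
  rw [ballVol, ← this]

end AuxLemmas

theorem stmt_8 (F : Type) [Field F] [Fintype F] (q t n : ℕ)
    (hq : Fintype.card F = q) (ht : 1 ≤ t) (hn : 2 ≤ n) (hqt : t + 1 < q) :
    ¬ ∃ (C : Submodule F (Fin t → Matrix (Fin n) (Fin n) F)) (d : ℕ),
        IsMinDist C d ∧ IsPerfect F C d ∧ (d - 1) / 2 = 1 := by
  classical
  rintro ⟨C, d, -, hperf, hd⟩
  rw [IsPerfect, hd] at hperf
  set R := Nat.card {A : Matrix (Fin n) (Fin n) F // A.rank = 1} with hR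
  have hV : ballVol F t n n 1 = 1 + t * R := myBall
  have hq3 : 3 ≤ q := by omega
  have h1q : 1 ≤ q := by omega
  have h1qn : 1 ≤ q ^ n := Nat.one_le_pow _ _ (by omega)
  have hcount : R * (q - 1) = (q ^ n - 1) * (q ^ n - 1) := by
    rw [hR]
    have := myCount (F := F) (n := n)
    rwa [hq] at this
  -- cardinalities are powers of q
  letI : Fintype C := Fintype.ofFinite C
  have hC : Nat.card C = q ^ (Module.finrank F C) := by
    rw [Nat.card_eq_fintype_card, Module.card_eq_pow_finrank (K := F), hq]
  set N := Module.finrank F (Fin t → Matrix (Fin n) (Fin n) F) with hN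
  have hM : Nat.card (Fin t → Matrix (Fin n) (Fin n) F) = q ^ N := by
    rw [Nat.card_eq_fintype_card, Module.card_eq_pow_finrank (K := F), hq]
  rw [hC, hM] at hperf
  set V := ballVol F t n n 1 with hVdef
  have hdvd : V ∣ q ^ N := ⟨q ^ Module.finrank F C, by rw [← hperf]; ring⟩
  -- q is a prime power
  obtain ⟨p, -, e, hp, hqe⟩ := FiniteField.card' F
  rw [hq] at hqe
  -- V > q ^ 2
  have hRge : q ^ 2 ≤ R := by
    have h1 : q ^ 2 ≤ q ^ n := Nat.pow_le_pow_right h1q hn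
    have h2 : (q ^ 2 - 1) * (q ^ 2 - 1) ≤ (q ^ n - 1) * (q ^ n - 1) :=
      Nat.mul_le_mul (by omega) (by omega)
    have h3 : q ^ 2 * (q - 1) ≤ (q ^ 2 - 1) * (q ^ 2 - 1) := by
      zify [show (1:ℕ) ≤ q ^ 2 from le_trans h1q (Nat.le_self_pow (by omega) q), h1q]
      have hq3' : (3:ℤ) ≤ (q:ℤ) := by exact_mod_cast hq3
      nlinarith
    have h4 : q ^ 2 * (q - 1) ≤ R * (q - 1) := by
      rw [hcount]; exact le_trans h3 h2
    exact Nat.le_of_mul_le_mul_right h4 (by omega)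
  have hVgt : q ^ 2 < V := by
    rw [hV]
    have : R ≤ t * R := Nat.le_mul_of_pos_left R (by omega)
    omega
  -- q ^ 2 divides V
  have hq2V : q ^ 2 ∣ V := by
    have hdvd' : V ∣ p ^ ((e : ℕ) * N) := by
      rw [pow_mul, ← hqe]; exact hdvd
    obtain ⟨s, hsle, hVs⟩ := (Nat.dvd_prime_pow hp).mp hdvd'
    have hq2 : q ^ 2 = p ^ ((e : ℕ) * 2) := by rw [pow_mul, ← hqe]
    have hlt : p ^ ((e : ℕ) * 2) < p ^ s := by rw [← hq2, ← hVs]; exact hVgt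
    have hs : (e : ℕ) * 2 < s := by
      by_contra hcon
      exact absurd (Nat.pow_le_pow_right hp.one_le (by omega)) (not_le.mpr hlt)
    rw [hq2, hVs]
    exact pow_dvd_pow p (le_of_lt hs)
  -- final contradiction
  have hcountZ : (R:ℤ) * ((q:ℤ) - 1) = ((q:ℤ) ^ n - 1) * ((q:ℤ) ^ n - 1) := by
    zify [h1q, h1qn] at hcount
    exact hcount
  have hVz : (V:ℤ) = 1 + (t:ℤ) * (R:ℤ) := by exact_mod_cast hV
  have hVR : (V:ℤ) * ((q:ℤ) - 1) = ((q:ℤ) - 1) + (t:ℤ) * (((q:ℤ) ^ n - 1) * ((q:ℤ) ^ n - 1)) := by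
    linear_combination ((q:ℤ) - 1) * hVz + (t:ℤ) * hcountZ
  have hA : (q:ℤ) ^ 2 ∣ (V:ℤ) * ((q:ℤ) - 1) := by
    have : ((q:ℤ)) ^ 2 ∣ (V:ℤ) := by exact_mod_cast Int.natCast_dvd_natCast.mpr hq2V
    exact this.mul_right _
  have hx : (q:ℤ) ^ 2 ∣ (q:ℤ) ^ n := pow_dvd_pow _ hn
  have hy : (q:ℤ) ^ 2 ∣ ((q:ℤ) ^ n * (q:ℤ) ^ n - 2 * (q:ℤ) ^ n) :=
    dvd_sub (hx.mul_left _) (hx.mul_left 2)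
  have hdvd2 : (q:ℤ) ^ 2 ∣ ((q:ℤ) - 1 + (t:ℤ)) := by
    have heq : (q:ℤ) - 1 + (t:ℤ) =
        (V:ℤ) * ((q:ℤ) - 1) - (t:ℤ) * ((q:ℤ) ^ n * (q:ℤ) ^ n - 2 * (q:ℤ) ^ n) := by
      rw [hVR]; ring
    rw [heq]
    exact dvd_sub hA (hy.mul_left _)
  have hpos : (0:ℤ) < (q:ℤ) - 1 + (t:ℤ) := by
    have : (3:ℤ) ≤ (q:ℤ) := by exact_mod_cast hq3
    have : (1:ℤ) ≤ (t:ℤ) := by exact_mod_cast ht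
    omega
  have hle := Int.le_of_dvd hpos hdvd2
  have htq : (t:ℤ) ≤ (q:ℤ) - 2 := by
    have : ((t:ℤ) + 1) < (q:ℤ) := by exact_mod_cast hqt
    omega
  have hq3' : (3:ℤ) ≤ (q:ℤ) := by exact_mod_cast hq3
  nlinarith
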